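/- Let n ≥ 2 and let c be a self-conjugate 2n-core with φ_{2n}(c) = (m_0,…,m_{n−1}, −m_{n−1},…,−m_0). Then c has an even number of boxes on its main diagonal (i.e. c ∈ 𝒞_{2n}^{s,p}) if and only if Σ_{i=0}^{n−1} |m_i| ≡ 0 (mod 2). -/

import Mathlib

open scoped Classical

/-- `p k` is the `(k+1)`-st part `λ_{k+1}` of the partition `λ` :
partitions are encoded by their (eventually zero, antitone) sequence of parts. -/
def IsPartition (p : ℕ → ℕ) : Prop :=
  Antitone p ∧ ∃ N, ∀ i, N ≤ i → p i = 0

/-- The number of (nonzero) parts of a partition. -/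
noncomputable def plen (p : ℕ → ℕ) : ℕ := Nat.card {i : ℕ // p i ≠ 0}

/-- The number of boxes `|λ|` of a partition. -/
noncomputable def psize (p : ℕ → ℕ) : ℕ := ∑ i ∈ Finset.range (plen p), p i

/-- The conjugate partition : `pconj p j = λ^tr_{j+1}`. -/
noncomputable def pconj (p : ℕ → ℕ) (j : ℕ) : ℕ := Nat.card {i : ℕ // j + 1 ≤ p i}

/-- The size of the Durfee square of a partition. -/
noncomputable def durfee (p : ℕ → ℕ) : ℕ := Nat.card {i : ℕ // i + 1 ≤ p i}

/-- The cells (boxes) of the Young diagram, `0`-indexed : `(i, j)` is the box in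
row `i+1` and column `j+1`. -/
noncomputable def cells (p : ℕ → ℕ) : Finset (ℕ × ℕ) :=
  (Finset.range (plen p) ×ˢ Finset.range (p 0)).filter fun s => s.2 < p s.1

/-- The hook length of the (0-indexed) box `(i, j)` :
`h = λ_{i+1} - (j+1) + λ^tr_{j+1} - (i+1) + 1`. -/
noncomputable def hookLen (p : ℕ → ℕ) (i j : ℕ) : ℕ :=
  (p i - j) + (pconj p j - i) - 1

/-- The multiset of hook lengths `ℋ(λ)`. -/
noncomputable def hooks (p : ℕ → ℕ) : Multiset ℕ :=
  (cells p).val.map fun s => hookLen p s.1 s.2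

/-- The multiset of hook lengths of the boxes strictly above the main diagonal. -/
noncomputable def hooksAbove (p : ℕ → ℕ) : Multiset ℕ :=
  ((cells p).filter fun s => s.1 < s.2).val.map fun s => hookLen p s.1 s.2

/-- The multiset of hook lengths of the boxes strictly below the main diagonal. -/
noncomputable def hooksBelow (p : ℕ → ℕ) : Multiset ℕ :=
  ((cells p).filter fun s => s.2 < s.1).val.map fun s => hookLen p s.1 s.2

/-- `p` is an `n`-core : no hook length is equal to `n`. -/
def IsCore (n : ℕ) (p : ℕ → ℕ) : Prop := n ∉ hooks p

/-- Self-conjugate partitions. -/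
def SelfConj (p : ℕ → ℕ) : Prop := p = pconj p

/-- Distinct partitions (strictly decreasing nonzero parts). -/
def IsDistinct (p : ℕ → ℕ) : Prop := ∀ i, p (i + 1) ≠ 0 → p (i + 1) < p i

/-- Doubled distinct partitions : `λ_i = λ^tr_i + 1` for `i` at most
the size of the Durfee square. -/
def IsDD (p : ℕ → ℕ) : Prop := ∀ i < durfee p, p i = pconj p i + 1

/-- Conjugates of doubled distinct partitions. -/
def IsDDtr (p : ℕ → ℕ) : Prop := ∃ q, IsPartition q ∧ IsDD q ∧ p = pconj q

/-- The doubled distinct partition `λ̄λ̄` of a distinct partition `λ̄` :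
add `λ̄_i` boxes to the `i`-th column of the shifted Young diagram of `λ̄`. -/
noncomputable def double (b : ℕ → ℕ) : ℕ → ℕ := fun i =>
  if i < plen b then b i + (i + 1)
  else Nat.card {j : ℕ // j < plen b ∧ i + 1 ≤ b j + j}

/-- The self-conjugate partition associated with a distinct partition `λ̄` :
add `λ̄_i - 1` boxes to the `i`-th column of the shifted Young diagram of `λ̄`. -/
noncomputable def scOf (b : ℕ → ℕ) : ℕ → ℕ := fun i =>
  if i < plen b then b i + i
  else Nat.card {j : ℕ // j < plen b ∧ i + 1 ≤ b j + j}

/-- The binary word `ψ(λ) = (c_k)_{k ∈ ℤ}` of a partition :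
`c_k = 0` iff `k ∈ {λ_i - i : i ≥ 1}` and `c_k = 1` otherwise
(i.e. iff `k ∈ {j - λ^tr_j - 1 : j ≥ 1}`). -/
noncomputable def word (p : ℕ → ℕ) (k : ℤ) : ℕ :=
  if ∃ m : ℕ, k = (p m : ℤ) - ((m : ℤ) + 1) then 0 else 1

/-- The `g`-charge of a `g`-core : `m_i = min {k ∈ ℤ : c_{kg+i} = 1}`. -/
noncomputable def ncharge (g : ℕ) (p : ℕ → ℕ) (i : ℕ) : ℤ :=
  sInf {k : ℤ | word p (k * (g : ℤ) + (i : ℤ)) = 1}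

/-- The subword of residue `k` modulo `g` of the word of `p`. -/
noncomputable def subword (g k : ℕ) (p : ℕ → ℕ) (i : ℤ) : ℕ :=
  word p ((g : ℤ) * i + (k : ℤ))

/-- The shift turning the subword of residue `k` into a balanced partition word. -/
noncomputable def qcharge (g : ℕ) (p : ℕ → ℕ) (k : ℕ) : ℤ :=
  (Nat.card {i : ℕ // subword g k p (i : ℤ) = 0} : ℤ) -
    (Nat.card {i : ℕ // subword g k p (-((i : ℤ) + 1)) = 1} : ℤ)

/-- `ν` is the `k`-th component of the `g`-quotient of `p` : its word is the
subword of residue `k` of the word of `p`, reindexed so as to be balanced. -/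
def IsQuotientAt (g : ℕ) (p : ℕ → ℕ) (k : ℕ) (ν : ℕ → ℕ) : Prop :=
  ∀ i : ℤ, word ν i = subword g k p (i + qcharge g p k)

/-- `ω` is the `g`-core of `p` : every subword of its word is sorted
(all `0`'s, then all `1`'s), with transition index the charge of `p`. -/
def IsCoreOf (g : ℕ) (p ω : ℕ → ℕ) : Prop :=
  ∀ k < g, ∀ i : ℤ, (subword g k ω i = 1 ↔ qcharge g p k ≤ i)

/-- `(ω, ν)` is the Littlewood decomposition of `p` for the modulus `g`. -/
def IsLittlewood (g : ℕ) (p ω : ℕ → ℕ) (ν : ℕ → ℕ → ℕ) : Prop :=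
  IsCoreOf g p ω ∧ ∀ k < g, IsQuotientAt g p k (ν k)

/-- The number `a_r` of boxes of residue `r` modulo `g`
(the residue of the box `(i, j)` -- `0`-indexed -- being `(j - i) mod g`). -/
noncomputable def resCount (g : ℕ) (p : ℕ → ℕ) (r : ℕ) : ℕ :=
  ((cells p).filter fun s => ((s.2 : ℤ) - (s.1 : ℤ)) % (g : ℤ) = (r : ℤ)).card

/-- The rectangular partition with `r` rows of length `c`. -/
def rect (r c : ℕ) : ℕ → ℕ := fun i => if i < r then c else 0

/-- The statistic `m = max({1} ∪ {(g + λ̄_i)/g : λ̄_i ≡ 0 (mod g)})`. -/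
noncomputable def mStat (g : ℕ) (b : ℕ → ℕ) : ℕ :=
  sSup ({1} ∪ {k : ℕ | ∃ i < plen b, g ∣ b i ∧ k = (g + b i) / g})

/-- The statistic `m' = max({0} ∪ {λ̄_i/g : λ̄_i ≡ g/2 (mod g)})`. -/
noncomputable def mStat' (g : ℕ) (b : ℕ → ℕ) : ℕ :=
  sSup ({0} ∪ {k : ℕ | ∃ i < plen b, 2 * (b i % g) = g ∧ k = b i / g})

private lemma downward_mem_iff {S : Set ℕ} (hfin : S.Finite)
    (hdc : ∀ ⦃i j : ℕ⦄, j ≤ i → i ∈ S → j ∈ S) {k : ℕ} :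
    k ∈ S ↔ k < Nat.card S := by
  have hne : Sᶜ.Nonempty := by
    by_contra h
    rw [Set.not_nonempty_iff_eq_empty, Set.compl_empty_iff] at h
    exact Set.infinite_univ (h ▸ hfin)
  have hS : S = Set.Iio (sInf Sᶜ) := by
    ext j
    simp only [Set.mem_Iio]
    constructor
    · intro hj
      by_contra h
      push_neg at h
      exact (Nat.sInf_mem hne) (hdc h hj)
    · intro hj
      by_contra h
      exact absurd (Nat.sInf_le (show j ∈ Sᶜ from h)) (by omega)
  have hcard : Nat.card (Set.Iio (sInf Sᶜ)) = sInf Sᶜ := by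
    simp [Nat.card_eq_card_toFinset]
  rw [hS, hcard, Set.mem_Iio]

lemma lt_plen_iff {p : ℕ → ℕ} (hp : IsPartition p) {i : ℕ} : p i ≠ 0 ↔ i < plen p := by
  obtain ⟨hmono, N, hN⟩ := hp
  exact downward_mem_iff (S := {i | p i ≠ 0})
    (Set.Finite.subset (Set.finite_Iio N) (fun j hj => by
      simp only [Set.mem_Iio]
      by_contra h
      exact hj (hN j (by omega))))
    (fun i j hle hi h0 => hi (Nat.le_zero.mp (h0 ▸ hmono hle)))

lemma lt_pconj_iff {p : ℕ → ℕ} (hp : IsPartition p) {i j : ℕ} :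
    j + 1 ≤ p i ↔ i < pconj p j := by
  obtain ⟨hmono, N, hN⟩ := hp
  exact downward_mem_iff (S := {i | j + 1 ≤ p i})
    (Set.Finite.subset (Set.finite_Iio N) (fun m hm => by
      simp only [Set.mem_Iio]
      by_contra h
      simp only [Set.mem_setOf_eq] at hm
      rw [hN m (by omega)] at hm
      omega))
    (fun a b hle ha => le_trans ha (hmono hle))

lemma lt_durfee_iff {p : ℕ → ℕ} (hp : IsPartition p) {i : ℕ} :
    i + 1 ≤ p i ↔ i < durfee p := by
  obtain ⟨hmono, N, hN⟩ := hp
  exact downward_mem_iff (S := {i | i + 1 ≤ p i})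
    (Set.Finite.subset (Set.finite_Iio N) (fun m hm => by
      simp only [Set.mem_Iio]
      by_contra h
      simp only [Set.mem_setOf_eq] at hm
      rw [hN m (by omega)] at hm
      omega))
    (fun a b hle ha => by
      simp only [Set.mem_setOf_eq] at *
      have := hmono hle
      omega)

lemma pconj_antitone {p : ℕ → ℕ} (hp : IsPartition p) {a b : ℕ} (hab : a ≤ b) :
    pconj p b ≤ pconj p a := by
  by_contra hc
  push_neg at hc
  have h3 : b + 1 ≤ p (pconj p a) := (lt_pconj_iff hp).mpr hc
  have h4 : a + 1 ≤ p (pconj p a) := by omega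
  exact absurd ((lt_pconj_iff hp).mp h4) (by omega)

lemma pconj_le {p : ℕ → ℕ} (hp : IsPartition p) {N : ℕ} (hN : ∀ i, N ≤ i → p i = 0)
    (j : ℕ) : pconj p j ≤ N := by
  by_contra h
  push_neg at h
  have := (lt_pconj_iff hp).mpr h
  rw [hN N le_rfl] at this
  omega


lemma word_eq_zero_iff {p : ℕ → ℕ} {k : ℤ} :
    word p k = 0 ↔ ∃ m : ℕ, k = (p m : ℤ) - ((m : ℤ) + 1) := by
  unfold word; split <;> simp_all

lemma word_eq_one_iff {p : ℕ → ℕ} {k : ℤ} :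
    word p k = 1 ↔ ¬ ∃ m : ℕ, k = (p m : ℤ) - ((m : ℤ) + 1) := by
  unfold word; split <;> simp_all

lemma word_cases (p : ℕ → ℕ) (k : ℤ) : word p k = 0 ∨ word p k = 1 := by
  unfold word; split <;> simp

lemma zsep {p : ℕ → ℕ} (hp : IsPartition p) {m j : ℕ} :
    (p m : ℤ) - ((m : ℤ) + 1) ≠ (j : ℤ) - (pconj p j : ℤ) := by
  intro h
  by_cases hc : j + 1 ≤ p m
  · have := (lt_pconj_iff hp).mp hc
    omega
  · have : ¬ (m < pconj p j) := fun hh => hc ((lt_pconj_iff hp).mpr hh)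
    omega

lemma word_one_iff_conj {p : ℕ → ℕ} (hp : IsPartition p) {k : ℤ} :
    word p k = 1 ↔ ∃ j : ℕ, k = (j : ℤ) - (pconj p j : ℤ) := by
  have hmono := hp.1
  obtain ⟨N, hN⟩ := hp.2
  constructor
  · intro h1
    rw [word_eq_one_iff] at h1
    by_cases hbig : (p 0 : ℤ) ≤ k
    · refine ⟨k.toNat, ?_⟩
      have h0 : pconj p k.toNat = 0 := by
        by_contra h
        have h2 : k.toNat + 1 ≤ p 0 := (lt_pconj_iff hp).mpr (by omega)
        have := hmono (Nat.zero_le 0)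
        omega
      rw [h0]
      omega
    · push_neg at hbig
      have hlow : -(N : ℤ) ≤ k := by
        by_contra h
        push_neg at h
        exact h1 ⟨(-k-1).toNat, by rw [hN (-k-1).toNat (by omega)]; omega⟩
      classical
      set Z : Finset ℤ := (Finset.range N).image (fun m => (p m : ℤ) - (m + 1)) with hZ
      set O : Finset ℤ := (Finset.range (p 0)).image
        (fun j : ℕ => (j : ℤ) - (pconj p j : ℤ)) with hO
      have hZcard : Z.card = N := by
        rw [hZ, Finset.card_image_of_injOn, Finset.card_range]
        intro a _ b _ hab
        simp only at hab
        rcases le_total a b with h | h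
        · have := hmono h; omega
        · have := hmono h; omega
      have hOcard : O.card = p 0 := by
        rw [hO, Finset.card_image_of_injOn, Finset.card_range]
        intro a _ b _ hab
        simp only at hab
        rcases le_total a b with h | h
        · have := pconj_antitone hp h; omega
        · have := pconj_antitone hp h; omega
      have hdisj : Disjoint Z O := by
        rw [Finset.disjoint_left]
        rintro t htZ htO
        rw [hZ, Finset.mem_image] at htZ
        rw [hO, Finset.mem_image] at htO
        obtain ⟨m, _, hm⟩ := htZ
        obtain ⟨j, _, hj⟩ := htO
        exact zsep hp (hm.trans hj.symm)
      have hsub : Z ∪ O ⊆ Finset.Icc (-(N:ℤ)) ((p 0 : ℤ) - 1) := by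
        intro t ht
        rw [Finset.mem_union] at ht
        rw [Finset.mem_Icc]
        rcases ht with ht | ht
        · rw [hZ, Finset.mem_image] at ht
          obtain ⟨m, hm, rfl⟩ := ht
          rw [Finset.mem_range] at hm
          have := hmono (Nat.zero_le m)
          omega
        · rw [hO, Finset.mem_image] at ht
          obtain ⟨j, hj, rfl⟩ := ht
          rw [Finset.mem_range] at hj
          have := pconj_le hp hN j
          omega
      have hIcard : (Finset.Icc (-(N:ℤ)) ((p 0 : ℤ) - 1)).card = p 0 + N := by
        rw [Int.card_Icc]
        omega
      have heq : Z ∪ O = Finset.Icc (-(N:ℤ)) ((p 0 : ℤ) - 1) := by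
        apply Finset.eq_of_subset_of_card_le hsub
        rw [hIcard, Finset.card_union_of_disjoint hdisj, hZcard, hOcard]
        omega
      have hk : k ∈ Z ∪ O := by
        rw [heq, Finset.mem_Icc]
        omega
      rw [Finset.mem_union] at hk
      rcases hk with hk | hk
      · rw [hZ, Finset.mem_image] at hk
        obtain ⟨m, _, hm⟩ := hk
        exact absurd ⟨m, hm.symm⟩ h1
      · rw [hO, Finset.mem_image] at hk
        obtain ⟨j, _, hj⟩ := hk
        exact ⟨j, hj.symm⟩
  · rintro ⟨j, rfl⟩
    rw [word_eq_one_iff]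
    rintro ⟨m, hm⟩
    exact zsep hp hm.symm

lemma hook_mem {p : ℕ → ℕ} (hp : IsPartition p) {h : ℕ} (hh : 1 ≤ h) {k : ℤ}
    (h0 : word p k = 0) (h1 : word p (k - h) = 1) : h ∈ hooks p := by
  obtain ⟨m, hm⟩ := word_eq_zero_iff.mp h0
  obtain ⟨j, hj⟩ := (word_one_iff_conj hp).mp h1
  have hjm : j + 1 ≤ p m := by
    by_contra hc
    have : ¬ m < pconj p j := fun hh2 => hc ((lt_pconj_iff hp).mpr hh2)
    omega
  have hmc : m < pconj p j := (lt_pconj_iff hp).mp hjm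
  have hm0 : m < plen p := (lt_plen_iff hp).mp (by omega)
  have hj0 : j < p 0 := by
    have := hp.1 (Nat.zero_le m)
    omega
  refine Multiset.mem_map.mpr ⟨(m, j), ?_, ?_⟩
  · have : (m, j) ∈ cells p := by
      rw [cells, Finset.mem_filter, Finset.mem_product, Finset.mem_range, Finset.mem_range]
      refine ⟨⟨hm0, hj0⟩, ?_⟩
      show j < p m
      omega
    exact this
  · show hookLen p m j = h
    rw [hookLen]
    omega

lemma word_succ {p : ℕ → ℕ} (hp : IsPartition p) {g : ℕ} (hcore : IsCore g p)
    (hg : 1 ≤ g) {k : ℤ} (h1 : word p k = 1) : word p (k + g) = 1 := by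
  rcases word_cases p (k + g) with h0 | h
  · exact absurd (hook_mem hp hg h0 (by rw [add_sub_cancel_right]; exact h1)) hcore
  · exact h

lemma word_add_mul {p : ℕ → ℕ} (hp : IsPartition p) {g : ℕ} (hcore : IsCore g p)
    (hg : 1 ≤ g) {k : ℤ} (h1 : word p k = 1) (d : ℕ) : word p (k + d * g) = 1 := by
  induction d with
  | zero => simpa using h1
  | succ d ih =>
      have h2 := word_succ hp hcore hg ih
      have : k + (d:ℤ) * g + g = k + ((d:ℕ)+1 : ℕ) * g := by push_cast; ring
      rwa [this] at h2

lemma word_low {p : ℕ → ℕ} {N : ℕ} (hN : ∀ i, N ≤ i → p i = 0) {t : ℤ}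
    (ht : t ≤ -(N:ℤ) - 1) : word p t = 0 :=
  word_eq_zero_iff.mpr ⟨(-t-1).toNat, by rw [hN (-t-1).toNat (by omega)]; omega⟩

lemma ncharge_le_iff {p : ℕ → ℕ} (hp : IsPartition p) {g : ℕ} (hcore : IsCore g p)
    (hg : 1 ≤ g) (i : ℕ) {k : ℤ} :
    word p (k * (g:ℤ) + (i:ℤ)) = 1 ↔ ncharge g p i ≤ k := by
  obtain ⟨N, hN⟩ := hp.2
  set S := {k : ℤ | word p (k * (g : ℤ) + (i : ℤ)) = 1} with hS
  have hbdd : BddBelow S := by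
    refine ⟨-((N:ℤ) + i + 1), fun x hx => ?_⟩
    by_contra hc
    push_neg at hc
    have hxg : x * (g:ℤ) ≤ x * 1 :=
      mul_le_mul_of_nonpos_left (by exact_mod_cast hg) (by omega)
    have hx0 : x * (g:ℤ) + i ≤ -(N:ℤ) - 1 := by omega
    have := word_low hN hx0
    have hx1 : word p (x * (g:ℤ) + i) = 1 := hx
    omega
  have hne : S.Nonempty := by
    refine ⟨(p 0 : ℤ), ?_⟩
    have hmul : (p 0 : ℤ) * 1 ≤ (p 0 : ℤ) * g :=
      mul_le_mul_of_nonneg_left (by exact_mod_cast hg) (by positivity)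
    show word p ((p 0 : ℤ) * g + i) = 1
    rw [word_eq_one_iff]
    rintro ⟨m, hm⟩
    have := hp.1 (Nat.zero_le m)
    set A := (p 0 : ℤ) * (g:ℤ) with hA
    omega
  constructor
  · intro h
    exact csInf_le hbdd h
  · intro h
    have hmem : sInf S ∈ S := Int.csInf_mem hne hbdd
    have h2 := word_add_mul hp hcore hg hmem (k - sInf S).toNat
    have h3 : sInf S * (g:ℤ) + i + ((k - sInf S).toNat : ℤ) * g = k * g + i := by
      rw [Int.toNat_of_nonneg (by rw [ncharge, ← hS] at h; omega)]
      ring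
    rwa [h3] at h2

lemma durfee_eq_sum {p : ℕ → ℕ} (hp : IsPartition p) {g : ℕ} (hcore : IsCore g p)
    (hg : 1 ≤ g) :
    durfee p = ∑ i ∈ Finset.range g, (ncharge g p i).toNat := by
  classical
  have hg0 : (0:ℤ) < g := by exact_mod_cast hg
  set A : Finset ℤ := (Finset.range (durfee p)).image
    (fun m : ℕ => (p m : ℤ) - ((m:ℤ) + 1)) with hA
  set B : Finset ℤ := (Finset.range g).biUnion
    (fun i => (Finset.Ico (0:ℤ) (ncharge g p i)).image (fun k => k * (g:ℤ) + (i:ℤ))) with hB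
  have hAB : A = B := by
    ext t
    have hmemA : t ∈ A ↔ (0 ≤ t ∧ word p t = 0) := by
      simp only [hA, Finset.mem_image, Finset.mem_range]
      constructor
      · rintro ⟨m, hm, rfl⟩
        have := (lt_durfee_iff hp).mpr hm
        exact ⟨by omega, word_eq_zero_iff.mpr ⟨m, rfl⟩⟩
      · rintro ⟨ht, h0⟩
        obtain ⟨m, rfl⟩ := word_eq_zero_iff.mp h0
        exact ⟨m, (lt_durfee_iff hp).mp (by omega), rfl⟩
    have hmemB : t ∈ B ↔ (0 ≤ t ∧ word p t = 0) := by
      simp only [hB, Finset.mem_biUnion, Finset.mem_range, Finset.mem_image, Finset.mem_Ico]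
      constructor
      · rintro ⟨i, hi, k, ⟨hk0, hki⟩, rfl⟩
        have hkg : 0 ≤ k * (g:ℤ) := mul_nonneg hk0 (by omega)
        refine ⟨by omega, ?_⟩
        rcases word_cases p (k * (g:ℤ) + (i:ℤ)) with h | h
        · exact h
        · exact absurd ((ncharge_le_iff hp hcore hg i).mp h) (by omega)
      · rintro ⟨ht, h0⟩
        have hmod0 : 0 ≤ t % g := Int.emod_nonneg t (by omega)
        have hmodg : t % g < g := Int.emod_lt_of_pos t hg0
        have hdiv0 : 0 ≤ t / g := Int.ediv_nonneg ht (by omega)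
        have ht' : (t / g) * (g:ℤ) + (((t % g).toNat : ℕ) : ℤ) = t := by
          rw [Int.toNat_of_nonneg hmod0, mul_comm]
          exact Int.mul_ediv_add_emod t g
        refine ⟨(t % g).toNat, by omega, t / g, ⟨hdiv0, ?_⟩, ht'⟩
        by_contra hc
        push_neg at hc
        have h1 := (ncharge_le_iff hp hcore hg (t % g).toNat).mpr hc
        rw [ht'] at h1
        omega
    rw [hmemA, hmemB]
  have hAcard : A.card = durfee p := by
    rw [hA, Finset.card_image_of_injOn, Finset.card_range]
    intro a _ b _ hab
    simp only at hab
    rcases le_total a b with h | h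
    · have := hp.1 h; omega
    · have := hp.1 h; omega
  have hBcard : B.card = ∑ i ∈ Finset.range g, (ncharge g p i).toNat := by
    rw [hB, Finset.card_biUnion]
    · refine Finset.sum_congr rfl (fun i _ => ?_)
      rw [Finset.card_image_of_injOn, Int.card_Ico, sub_zero]
      intro a _ b _ hab
      simp only at hab
      have : a * (g:ℤ) = b * g := by omega
      exact mul_right_cancel₀ (by omega) this
    · intro i hi j hj hij
      rw [Finset.mem_coe, Finset.mem_range] at hi hj
      rw [Function.onFun, Finset.disjoint_left]
      rintro t hti htj
      rw [Finset.mem_image] at hti htj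
      obtain ⟨a, _, ha⟩ := hti
      obtain ⟨b, _, hb⟩ := htj
      have hmi : t % g = i := by
        rw [← ha, show a * (g:ℤ) + i = i + g * a by ring, Int.add_mul_emod_self_left,
          Int.emod_eq_of_lt (by omega) (by omega)]
      have hmj : t % g = j := by
        rw [← hb, show b * (g:ℤ) + j = j + g * b by ring, Int.add_mul_emod_self_left,
          Int.emod_eq_of_lt (by omega) (by omega)]
      exact hij (by exact_mod_cast hmi.symm.trans hmj)
  rw [← hAcard, hAB, hBcard]

lemma sc_word {p : ℕ → ℕ} (hp : IsPartition p) (hsc : SelfConj p) {k : ℤ} :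
    word p k = 1 ↔ word p (-k-1) = 0 := by
  have hpc : ∀ j, (pconj p j : ℤ) = (p j : ℤ) := fun j => by
    rw [← congrFun hsc j]
  rw [word_one_iff_conj hp, word_eq_zero_iff]
  constructor
  · rintro ⟨j, rfl⟩
    exact ⟨j, by rw [hpc]; ring⟩
  · rintro ⟨m, hm⟩
    exact ⟨m, by rw [hpc]; omega⟩

lemma ncharge_reflect {p : ℕ → ℕ} (hp : IsPartition p) {g : ℕ} (hcore : IsCore g p)
    (hg : 1 ≤ g) (hsc : SelfConj p) {i : ℕ} (hi : i < g) :
    ncharge g p (g - 1 - i) = - ncharge g p i := by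
  have hcast : (((g - 1 - i : ℕ)) : ℤ) = (g:ℤ) - 1 - i := by omega
  have key : ∀ k : ℤ, word p (k * (g:ℤ) + ((g - 1 - i : ℕ) : ℤ)) = 1 ↔
      - ncharge g p i ≤ k := by
    intro k
    rw [hcast, sc_word hp hsc,
      show -(k * (g:ℤ) + ((g:ℤ) - 1 - i)) - 1 = (-k-1) * g + i by ring]
    constructor
    · intro h0
      by_contra hc
      push_neg at hc
      have h1 := (ncharge_le_iff hp hcore hg i).mpr
        (show ncharge g p i ≤ -k-1 by omega)
      omega
    · intro h
      rcases word_cases p ((-k-1) * (g:ℤ) + (i:ℤ)) with h0 | h1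
      · exact h0
      · have := (ncharge_le_iff hp hcore hg i).mp h1
        omega
  have hset : {k : ℤ | word p (k * (g : ℤ) + ((g - 1 - i : ℕ) : ℤ)) = 1}
      = Set.Ici (- ncharge g p i) := Set.ext key
  rw [ncharge, hset, csInf_Ici]

/-- A self-conjugate `2n`-core `c` with
`φ_{2n}(c) = (m_0, …, m_{n-1}, -m_{n-1}, …, -m_0)` has an even number of boxes
on its main diagonal (i.e. `c ∈ 𝒞_{2n}^{s,p}`) if and only if
`∑_{i=0}^{n-1} |m_i| ≡ 0 (mod 2)`. -/
theorem even_diagonal_iff_charge_parity (n : ℕ) (hn : 2 ≤ n) (c : ℕ → ℕ)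
    (hc : IsPartition c) (hcore : IsCore (2 * n) c) (hsc : SelfConj c) :
    Even (durfee c) ↔
      Even (∑ i ∈ Finset.range n, (ncharge (2 * n) c i).natAbs) := by
  have hg : 1 ≤ 2 * n := by omega
  have hd := durfee_eq_sum hc hcore hg
  have hsplit : ∑ i ∈ Finset.range (2 * n), (ncharge (2 * n) c i).toNat
      = ∑ i ∈ Finset.range n, ((ncharge (2 * n) c i).toNat
        + (ncharge (2 * n) c (2 * n - 1 - i)).toNat) := by
    rw [show 2 * n = n + n by ring, Finset.sum_range_add, Finset.sum_add_distrib]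
    congr 1
    rw [← Finset.sum_range_reflect (fun i => (ncharge (n + n) c (n + i)).toNat) n]
    refine Finset.sum_congr rfl (fun i hi => ?_)
    rw [Finset.mem_range] at hi
    congr 2
    omega
  have hterm : ∀ i ∈ Finset.range n,
      (ncharge (2 * n) c i).toNat + (ncharge (2 * n) c (2 * n - 1 - i)).toNat
        = (ncharge (2 * n) c i).natAbs := by
    intro i hi
    rw [Finset.mem_range] at hi
    rw [ncharge_reflect hc hcore hg hsc (show i < 2 * n by omega)]
    omega
  rw [hd, hsplit, Finset.sum_congr rfl hterm]
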